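/- Let alpha_{ij} be pairwise distinct nonzero elements of F_q indexed by blocks (i from 1 to m+1, j ranging over block i of size at most r, with n total columns, n <= q-1). Let h_{ij} = (alpha_{ij}, alpha_{ij}^2, ..., alpha_{ij}^{d-1})^T. Form the matrix H with ceil(n/r) block-indicator rows on top (each block augmented by one extra column with 1 in its indicator row and zero Vandermonde part) and the Vandermonde columns h_{ij} below. Then any d columns of H are linearly independent. -/

import Mathlib

open Finset

lemma van_supp_zero {F : Type*} [Field F] {n k : ℕ}
    {α : Fin n → F} (hinj : Function.Injective α) {c : Fin n → F}
    {S : Finset (Fin n)} (hsupp : ∀ j ∉ S, c j = 0) (hcard : S.card ≤ k)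
    (hsum : ∀ t, t < k → ∑ j, c j * α j ^ t = 0) : ∀ j, c j = 0 := by
  classical
  have key : ∀ x : S, c x = 0 := by
    set e := S.equivFin with he
    set β : Fin S.card → F := fun i => α (e.symm i) with hβ
    have hβinj : Function.Injective β := by
      intro a b hab
      exact e.symm.injective (Subtype.ext (hinj hab))
    have hmain : (fun i : Fin S.card => c (e.symm i)) = 0 := by
      apply Matrix.eq_zero_of_forall_pow_sum_mul_pow_eq_zero hβinj
      intro t
      have h0 := hsum (t : ℕ) (lt_of_lt_of_le t.isLt hcard)
      calc ∑ i : Fin S.card, c (e.symm i) * β i ^ (t : ℕ)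
          = ∑ x : S, c x * α x ^ (t : ℕ) :=
            Fintype.sum_equiv e.symm _ _ (fun i => rfl)
        _ = ∑ x ∈ S, c x * α x ^ (t : ℕ) := Finset.sum_coe_sort S (fun x => c x * α x ^ (t : ℕ))
        _ = ∑ x : Fin n, c x * α x ^ (t : ℕ) := by
            apply Finset.sum_subset (Finset.subset_univ S)
            intro x _ hx
            rw [hsupp x hx, zero_mul]
        _ = 0 := h0
    intro x
    have := congrFun hmain (e x)
    simpa using this
  intro j
  by_cases hj : j ∈ S
  · exact key ⟨j, hj⟩
  · exact hsupp j hj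

/-- The columns of `M` indexed by the finite set `T` are linearly independent. -/
def ColsLinearIndependent {F : Type*} [Field F] {ρ ι : Type*}
    (M : Matrix ρ ι F) (T : Finset ι) : Prop :=
  LinearIndependent F (fun j : T => fun i => M i (j : ι))

/-- The lengthened matrix `H` of Equation (5): columns of `H0` are grouped into `b` consecutive
blocks of size at most `r` (column `j` lies in block `j / r`); on top we add one indicator row
per block (equal to `1` on the columns of that block and on the appended extra column of that
block, `0` elsewhere), and for each block we append one extra column whose `H0`-part is zero. -/
def lengthenMatrix {F : Type*} [Field F] {m n : ℕ} (H0 : Matrix (Fin m) (Fin n) F)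
    (r b : ℕ) : Matrix (Fin b ⊕ Fin m) (Fin n ⊕ Fin b) F :=
  fun x y =>
    match x, y with
    | Sum.inl i, Sum.inl j => if (j : ℕ) / r = (i : ℕ) then 1 else 0
    | Sum.inl i, Sum.inr i' => if i = i' then 1 else 0
    | Sum.inr i, Sum.inl j => H0 i j
    | Sum.inr _, Sum.inr _ => 0

/-- let `α_{ij}` be `n` pairwise distinct nonzero elements of `F_q` (`n ≤ q-1`),
and let `H0` be the `(d-1) × n` matrix with columns `(α_j, α_j², …, α_j^{d-1})ᵀ`. Form `H`
from `H0` by the block-indicator lengthening construction (blocks of size at most `r`, one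
indicator row and one appended extra column per block). Then any `d` columns of `H` are
linearly independent. -/
theorem vandermonde_lengthened_cols_linearIndependent {q n m s r b d : ℕ}
    {F : Type*} [Field F] [Fintype F] (hcard : Fintype.card F = q)
    (hnq : n ≤ q - 1) (hd : 2 ≤ d) (hr : 1 ≤ r)
    (hn : n = m * r + s) (hs1 : 1 ≤ s) (hsr : s ≤ r)
    (hb : b = (n + r - 1) / r)
    (α : Fin n → F) (hinj : Function.Injective α) (hne : ∀ j, α j ≠ 0) :
    ∀ T : Finset (Fin n ⊕ Fin b), T.card = d →
      ColsLinearIndependent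
        (lengthenMatrix (fun (t : Fin (d - 1)) (j : Fin n) => α j ^ ((t : ℕ) + 1)) r b) T := by
  classical
  intro T hT
  unfold ColsLinearIndependent
  rw [Fintype.linearIndependent_iff]
  intro g hg
  set M : Matrix (Fin b ⊕ Fin (d-1)) (Fin n ⊕ Fin b) F :=
    lengthenMatrix (fun (t : Fin (d - 1)) (j : Fin n) => α j ^ ((t : ℕ) + 1)) r b with hM
  set G : Fin n ⊕ Fin b → F := fun y => if h : y ∈ T then g ⟨y, h⟩ else 0 with hG
  have hrow : ∀ x, (∑ j : Fin n, G (Sum.inl j) * M x (Sum.inl j))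
      + ∑ i : Fin b, G (Sum.inr i) * M x (Sum.inr i) = 0 := by
    intro x
    have h1 : ∑ y : T, g y * M x (y : Fin n ⊕ Fin b) = 0 := by
      have := congrFun hg x
      simpa using this
    have h2 : ∑ y : Fin n ⊕ Fin b, G y * M x y = 0 := by
      have e1 : ∑ y ∈ T, G y * M x y = ∑ y : Fin n ⊕ Fin b, G y * M x y := by
        apply Finset.sum_subset (Finset.subset_univ T)
        intro y _ hy
        simp [hG, hy]
      have e2 : ∑ y : T, G (y : Fin n ⊕ Fin b) * M x (y : Fin n ⊕ Fin b)
          = ∑ y ∈ T, G y * M x y := Finset.sum_coe_sort T (fun y => G y * M x y)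
      rw [← e1, ← e2, ← h1]
      apply Finset.sum_congr rfl
      intro y _
      simp only [hG]
      rw [dif_pos y.2]
    rw [Fintype.sum_sum_type] at h2
    exact h2
  set c : Fin n → F := fun j => G (Sum.inl j) with hc
  set eE : Fin b → F := fun i => G (Sum.inr i) with heE
  have hVan : ∀ t : Fin (d-1), ∑ j, c j * α j ^ ((t : ℕ) + 1) = 0 := by
    intro t
    have h := hrow (Sum.inr t)
    simpa [hM, lengthenMatrix] using h
  have hVan' : ∀ t, t < d - 1 → ∑ j, (c j * α j) * α j ^ t = 0 := by
    intro t ht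
    have h := hVan ⟨t, ht⟩
    rw [← h]
    apply Finset.sum_congr rfl
    intro j _
    ring
  have hInd : ∀ i : Fin b,
      (∑ j ∈ univ.filter (fun j : Fin n => (j : ℕ) / r = (i : ℕ)), c j) + eE i = 0 := by
    intro i
    have h := hrow (Sum.inl i)
    simp only [hM, lengthenMatrix] at h
    rw [← h]
    congr 1
    · rw [Finset.sum_filter]
      apply Finset.sum_congr rfl
      intro j _
      simp [mul_ite, hc]
    · simp [heE]
  set SL : Finset (Fin n) := univ.filter (fun j => Sum.inl j ∈ T) with hSL
  have hsupp : ∀ j ∉ SL, c j = 0 := by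
    intro j hj
    simp only [hSL, Finset.mem_filter, Finset.mem_univ, true_and] at hj
    simp [hc, hG, hj]
  have himg : SL.image (Sum.inl : Fin n → Fin n ⊕ Fin b) ⊆ T := by
    intro y hy
    rcases Finset.mem_image.mp hy with ⟨j, hj, rfl⟩
    simp only [hSL, Finset.mem_filter, Finset.mem_univ, true_and] at hj
    exact hj
  have hcardimg : SL.card = (SL.image (Sum.inl : Fin n → Fin n ⊕ Fin b)).card := by
    rw [Finset.card_image_of_injective SL
      (Sum.inl_injective : Function.Injective (Sum.inl : Fin n → Fin n ⊕ Fin b))]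
  suffices hGz : ∀ y, G y = 0 by
    intro y
    have h2 : G (y : Fin n ⊕ Fin b) = g y := by
      simp only [hG]
      rw [dif_pos y.2, Subtype.coe_eta]
    rw [← h2]
    exact hGz y
  by_cases hE : ∃ i : Fin b, Sum.inr i ∈ T
  · obtain ⟨i₀, hi₀⟩ := hE
    have hcardSL : SL.card ≤ d - 1 := by
      rw [hcardimg]
      have hsub : SL.image (Sum.inl : Fin n → Fin n ⊕ Fin b) ⊆ T.erase (Sum.inr i₀) := by
        intro y hy
        rcases Finset.mem_image.mp hy with ⟨j, hj, rfl⟩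
        exact Finset.mem_erase.mpr ⟨by simp, himg hy⟩
      calc (SL.image (Sum.inl : Fin n → Fin n ⊕ Fin b)).card ≤ (T.erase (Sum.inr i₀)).card := Finset.card_le_card hsub
        _ = d - 1 := by rw [Finset.card_erase_of_mem hi₀, hT]
    have hca : ∀ j, c j * α j = 0 :=
      van_supp_zero hinj (fun j hj => by rw [hsupp j hj, zero_mul]) hcardSL hVan'
    have hcz : ∀ j, c j = 0 := by
      intro j
      rcases mul_eq_zero.mp (hca j) with h | h
      · exact h
      · exact absurd h (hne j)
    have hez : ∀ i, eE i = 0 := by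
      intro i
      have h := hInd i
      rw [Finset.sum_eq_zero (fun j _ => hcz j), zero_add] at h
      exact h
    intro y
    cases y with
    | inl j => exact hcz j
    | inr i => exact hez i
  · push_neg at hE
    have hez : ∀ i, eE i = 0 := by
      intro i
      simp [heE, hG, hE i]
    have hblt : ∀ j : Fin n, (j : ℕ) / r < b := by
      intro j
      have h1 : (j : ℕ) / r ≤ (n - 1) / r := Nat.div_le_div_right (by omega)
      have hb' : b = (n - 1) / r + 1 := by
        rw [hb]
        have hnr : n + r - 1 = (n - 1) + r := by omega
        rw [hnr, Nat.add_div_right _ (by omega)]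
      omega
    have hsum0 : ∑ j, c j = 0 := by
      have hfib := Finset.sum_fiberwise_of_maps_to (s := (univ : Finset (Fin n)))
        (t := (univ : Finset (Fin b)))
        (g := fun j : Fin n => (⟨(j : ℕ) / r, hblt j⟩ : Fin b))
        (fun j _ => Finset.mem_univ _) c
      rw [← hfib]
      apply Finset.sum_eq_zero
      intro i _
      have h := hInd i
      rw [hez i, add_zero] at h
      rw [← h]
      congr 1
      apply Finset.filter_congr
      intro j _
      simp [Fin.ext_iff]
    have hcardSL : SL.card ≤ d := by
      rw [hcardimg]
      calc (SL.image (Sum.inl : Fin n → Fin n ⊕ Fin b)).card ≤ T.card := Finset.card_le_card himg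
        _ = d := hT
    have hsum' : ∀ t, t < d → ∑ j, c j * α j ^ t = 0 := by
      intro t ht
      rcases Nat.eq_zero_or_pos t with rfl | htpos
      · simpa using hsum0
      · have h := hVan' (t - 1) (by omega)
        rw [← h]
        apply Finset.sum_congr rfl
        intro j _
        have hp : α j ^ t = α j * α j ^ (t - 1) := by
          rw [← pow_succ']
          congr 1
          omega
        rw [hp]
        ring
    have hcz := van_supp_zero hinj hsupp hcardSL hsum'
    intro y
    cases y with
    | inl j => exact hcz j
    | inr i => exact hez i
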